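/- arXiv:2109.00910 — 3 statements merged into one kernel-verified Lean document; each statement's English description precedes it below -/
import Mathlib

section
/- For any real a, (1/√(2π)) ∫_{-∞}^{∞} Q(x) e^{-(x-a)²/2} dx ≤ Q(a) + (e^{-a²/4}/(2√2))·(1 − Q(a/√2)), where Q is the standard Gaussian tail function. -/
open Real

noncomputable def gaussQ (a : ℝ) : ℝ := ∫ t in Set.Ioi a, (1 / Real.sqrt (2 * π)) * Real.exp (-t ^ 2 / 2)

open MeasureTheory Set Filter

lemma g_integrable : Integrable (fun t : ℝ => Real.exp (-t ^ 2 / 2)) := by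
  have h := integrable_exp_neg_mul_sq (by norm_num : (0:ℝ) < 1/2)
  refine h.congr ?_
  filter_upwards with x
  ring_nf

lemma g_total : ∫ t : ℝ, Real.exp (-t ^ 2 / 2) = Real.sqrt (2 * π) := by
  have h := integral_gaussian (1/2)
  rw [show π / (1/2 : ℝ) = 2 * π by ring] at h
  rw [← h]; congr 1; funext x; ring_nf

section fub
variable (a : ℝ)

noncomputable def ff (a : ℝ) (x s : ℝ) : ℝ := Real.exp (-(s + x) ^ 2 / 2 - (x - a) ^ 2 / 2)

lemma ff_cont : Continuous (Function.uncurry (ff a)) := by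
  unfold ff Function.uncurry
  fun_prop

lemma ff_int_s (x : ℝ) : Integrable (fun s => ff a x s) := by
  unfold ff
  have : Integrable (fun s : ℝ => Real.exp (-(s + x) ^ 2 / 2) * Real.exp (-(x - a) ^ 2 / 2)) :=
    (g_integrable.comp_add_right x).mul_const _
  refine this.congr ?_
  filter_upwards with s
  rw [← Real.exp_add]; ring_nf

lemma ff_norm_int : Integrable (fun x => ∫ s in Set.Ioi (0:ℝ), ‖ff a x s‖) := by
  have hb : Integrable (fun x : ℝ => Real.sqrt (2*π) * Real.exp (-(x - a) ^ 2 / 2)) := by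
    have : Integrable (fun x : ℝ => Real.exp (-(x - a) ^ 2 / 2)) := by
      have := g_integrable.comp_add_right (-a)
      refine this.congr ?_
      filter_upwards with x
      ring_nf
    exact this.const_mul _
  refine hb.mono' ?_ ?_
  · exact ((ff_cont a).norm.aestronglyMeasurable).integral_prod_right'
      (ν := volume.restrict (Set.Ioi 0))
  · filter_upwards with x
    have h1 : ∫ s in Set.Ioi (0:ℝ), ‖ff a x s‖ = ∫ s in Set.Ioi (0:ℝ), ff a x s := by
      congr 1; funext s; rw [Real.norm_eq_abs]; exact abs_of_nonneg (Real.exp_pos _).le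
    have h2 : (0:ℝ) ≤ ∫ s in Set.Ioi (0:ℝ), ff a x s :=
      setIntegral_nonneg measurableSet_Ioi (fun s _ => (Real.exp_pos _).le)
    rw [Real.norm_eq_abs, h1, abs_of_nonneg h2]
    have h3 : ∫ s in Set.Ioi (0:ℝ), ff a x s ≤ ∫ s : ℝ, ff a x s :=
      setIntegral_le_integral (ff_int_s a x) (by filter_upwards with s using (Real.exp_pos _).le)
    refine h3.trans ?_
    have h4 : ∫ s : ℝ, ff a x s = Real.exp (-(x-a)^2/2) * ∫ s : ℝ, Real.exp (-(s+x)^2/2) := by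
      rw [← integral_const_mul]
      congr 1; funext s
      unfold ff
      rw [← Real.exp_add]; ring_nf
    have h5 : ∫ s : ℝ, Real.exp (-(s+x)^2/2) = Real.sqrt (2*π) := by
      rw [integral_add_right_eq_self (fun y => Real.exp (-y^2/2)) x, g_total]
    rw [h4, h5]; ring_nf; exact le_rfl

lemma ff_swap : ∫ x : ℝ, ∫ s in Set.Ioi (0:ℝ), ff a x s = ∫ s in Set.Ioi (0:ℝ), ∫ x : ℝ, ff a x s := by
  apply integral_integral_swap
  have hm : AEStronglyMeasurable (Function.uncurry (ff a))
      (volume.prod (volume.restrict (Set.Ioi 0))) := (ff_cont a).aestronglyMeasurable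
  rw [integrable_prod_iff hm]
  exact ⟨Filter.Eventually.of_forall fun x => (ff_int_s a x).integrableOn,
    ff_norm_int a⟩

end fub

lemma gaussQ_eq (a : ℝ) : gaussQ a = (1 / Real.sqrt (2 * π)) * ∫ t in Set.Ioi a, Real.exp (-t ^ 2 / 2) := by
  rw [gaussQ, integral_const_mul]

lemma shiftIoi (g : ℝ → ℝ) (x : ℝ) : ∫ s in Set.Ioi (0:ℝ), g (s + x) = ∫ t in Set.Ioi x, g t := by
  rw [← integral_indicator measurableSet_Ioi, ← integral_indicator measurableSet_Ioi,
    ← integral_add_right_eq_self (fun t => (Set.Ioi x).indicator g t) x]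
  congr 1
  funext s
  by_cases h : 0 < s
  · rw [Set.indicator_of_mem (by simpa using h), Set.indicator_of_mem (by simpa using h)]
  · rw [Set.indicator_of_notMem (by simpa using h), Set.indicator_of_notMem (by simpa using h)]

lemma inner_x (a s : ℝ) :
    ∫ x : ℝ, ff a x s = Real.sqrt π * Real.exp (-(s + a) ^ 2 / 4) := by
  unfold ff
  have key : ∀ x : ℝ, -(s + x) ^ 2 / 2 - (x - a) ^ 2 / 2
      = -(x + (s - a)/2) ^ 2 + (-(s + a) ^ 2 / 4) := by intro x; ring
  simp_rw [key, Real.exp_add, integral_mul_const]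
  have h1 : ∫ x : ℝ, Real.exp (-(x + (s - a)/2) ^ 2) = Real.sqrt π := by
    rw [integral_add_right_eq_self (fun y => Real.exp (-y^2)) ((s-a)/2)]
    have := integral_gaussian 1
    simpa using this
  rw [h1, mul_comm]

lemma partA (a : ℝ) :
    (1 / Real.sqrt (2 * π)) * ∫ x : ℝ, gaussQ x * Real.exp (-(x - a) ^ 2 / 2)
      = gaussQ (a / Real.sqrt 2) := by
  set K := Real.sqrt (2 * π) with hK
  have hKpos : 0 < K := Real.sqrt_pos.mpr (by positivity)
  have hpoint : ∀ x : ℝ, gaussQ x * Real.exp (-(x - a) ^ 2 / 2)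
      = (1/K) * ∫ s in Set.Ioi (0:ℝ), ff a x s := by
    intro x
    rw [gaussQ_eq, ← shiftIoi (fun t => Real.exp (-t^2/2)) x]
    rw [mul_comm _ (Real.exp (-(x-a)^2/2)), ← mul_assoc, mul_comm _ (1/K), mul_assoc,
      ← integral_const_mul]
    congr 1
    congr 1
    funext s
    unfold ff
    rw [← Real.exp_add]
    ring_nf
  have step1 : ∫ x : ℝ, gaussQ x * Real.exp (-(x - a) ^ 2 / 2)
      = (1/K) * ∫ s in Set.Ioi (0:ℝ), ∫ x : ℝ, ff a x s := by
    simp_rw [hpoint]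
    rw [integral_const_mul, ff_swap]
  have step2 : ∫ s in Set.Ioi (0:ℝ), ∫ x : ℝ, ff a x s
      = Real.sqrt π * ∫ w in Set.Ioi a, Real.exp (-w ^ 2 / 4) := by
    simp_rw [inner_x]
    rw [integral_const_mul]
    congr 1
    exact shiftIoi (fun w => Real.exp (-w^2/4)) a
  have step3 : ∫ w in Set.Ioi a, Real.exp (-w ^ 2 / 4)
      = Real.sqrt 2 * ∫ r in Set.Ioi (a / Real.sqrt 2), Real.exp (-r ^ 2 / 2) := by
    have h2 : (0:ℝ) < (Real.sqrt 2)⁻¹ := by positivity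
    have := integral_comp_mul_left_Ioi (fun r => Real.exp (-r^2/2)) a h2
    simp only [smul_eq_mul, inv_inv] at this
    have heq : ∀ x : ℝ, Real.exp (-((Real.sqrt 2)⁻¹ * x) ^ 2 / 2) = Real.exp (-x ^ 2 / 4) := by
      intro x
      congr 1
      rw [mul_pow, show ((Real.sqrt 2 : ℝ)⁻¹)^2 = 1/2 by
        rw [inv_pow, Real.sq_sqrt (by norm_num : (0:ℝ) ≤ 2)]; norm_num]
      ring
    simp_rw [heq] at this
    rw [this]
    congr 2
    rw [inv_mul_eq_div]
  rw [step1, step2, step3, gaussQ_eq]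
  have hKK : Real.sqrt π * Real.sqrt 2 = K := by
    rw [hK, ← Real.sqrt_mul (by positivity), mul_comm]
  rw [show Real.sqrt π * (Real.sqrt 2 * ∫ r in Set.Ioi (a / Real.sqrt 2), Real.exp (-r ^ 2 / 2))
      = K * ∫ r in Set.Ioi (a / Real.sqrt 2), Real.exp (-r ^ 2 / 2) by rw [← mul_assoc, hKK]]
  field_simp
  rw [mul_comm, hK]

lemma sqrt2pi_pos : 0 < Real.sqrt (2 * π) := Real.sqrt_pos.mpr (by positivity)

lemma gaussQ_nonneg (a : ℝ) : 0 ≤ gaussQ a := by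
  rw [gaussQ_eq]
  positivity

lemma gaussQ_le_one (a : ℝ) : gaussQ a ≤ 1 := by
  rw [gaussQ_eq]
  have h := setIntegral_le_integral (μ := volume) (s := Ioi a) g_integrable
    (by filter_upwards with x using by positivity)
  rw [g_total] at h
  calc (1 / Real.sqrt (2*π)) * ∫ t in Ioi a, Real.exp (-t^2/2)
      ≤ (1 / Real.sqrt (2*π)) * Real.sqrt (2*π) := by
        apply mul_le_mul_of_nonneg_left h (by positivity)
    _ = 1 := by field_simp

lemma gaussQ_anti {a b : ℝ} (hab : a ≤ b) : gaussQ b ≤ gaussQ a := by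
  rw [gaussQ_eq, gaussQ_eq]
  apply mul_le_mul_of_nonneg_left _ (by positivity)
  apply setIntegral_mono_set g_integrable.integrableOn
    (by filter_upwards with x using by positivity)
  exact HasSubset.Subset.eventuallyLE (Ioi_subset_Ioi hab)

lemma g_symm : ∫ t in Set.Iic (0:ℝ), Real.exp (-t ^ 2 / 2) = ∫ t in Set.Ioi (0:ℝ), Real.exp (-t ^ 2 / 2) := by
  have := integral_comp_neg_Iic (0:ℝ) (fun t => Real.exp (-t ^ 2 / 2))
  simp only [neg_zero] at this
  rw [← this]
  congr 1; funext x; ring_nf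

lemma g_split_compl (c : ℝ) :
    (∫ t in Set.Iic c, Real.exp (-t ^ 2 / 2)) + ∫ t in Set.Ioi c, Real.exp (-t ^ 2 / 2) = Real.sqrt (2 * π) := by
  rw [← g_total]
  have := integral_add_compl (measurableSet_Iic (a := c)) g_integrable
  rwa [compl_Iic] at this

lemma g_Iic_zero : ∫ t in Set.Iic (0:ℝ), Real.exp (-t ^ 2 / 2) = Real.sqrt (2 * π) / 2 := by
  have h := g_split_compl 0
  rw [g_symm] at h ⊢
  linarith

lemma g_split {c a : ℝ} (h : c ≤ a) :
    (∫ t in Set.Ioc c a, Real.exp (-t ^ 2 / 2)) + ∫ t in Set.Ioi a, Real.exp (-t ^ 2 / 2)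
      = ∫ t in Set.Ioi c, Real.exp (-t ^ 2 / 2) := by
  rw [← setIntegral_union (Set.Ioc_disjoint_Ioi le_rfl) measurableSet_Ioi
    g_integrable.integrableOn g_integrable.integrableOn, Set.Ioc_union_Ioi_eq_Ioi h]

lemma g_Ioc_le {c a : ℝ} (hc : 0 ≤ c) (h : c ≤ a) (B : ℝ) (hB : Real.exp (-c ^ 2 / 2) ≤ B) :
    ∫ t in Set.Ioc c a, Real.exp (-t ^ 2 / 2) ≤ (a - c) * B := by
  have : ∫ t in Set.Ioc c a, Real.exp (-t ^ 2 / 2) ≤ ∫ _t in Set.Ioc c a, B := by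
    apply setIntegral_mono_on g_integrable.integrableOn (integrableOn_const (by
      simp [Real.volume_Ioc])) measurableSet_Ioc
    intro x hx
    refine le_trans ?_ hB
    apply Real.exp_le_exp.mpr
    have hx1 := hx.1
    nlinarith [hx.1, hx.2]
  simpa [Real.volume_Ioc, ENNReal.toReal_ofReal (sub_nonneg.mpr h), smul_eq_mul, mul_comm, max_eq_left (sub_nonneg.mpr h)] using this

lemma g_Ioc_ge {c a : ℝ} (h : c ≤ a) (B : ℝ) (hB : B ≤ Real.exp (-a ^ 2 / 2)) (hc : 0 ≤ c) :
    (a - c) * B ≤ ∫ t in Set.Ioc c a, Real.exp (-t ^ 2 / 2) := by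
  have : ∫ _t in Set.Ioc c a, B ≤ ∫ t in Set.Ioc c a, Real.exp (-t ^ 2 / 2) := by
    apply setIntegral_mono_on (integrableOn_const (by
      simp [Real.volume_Ioc])) g_integrable.integrableOn measurableSet_Ioc
    intro x hx
    refine le_trans hB ?_
    apply Real.exp_le_exp.mpr
    nlinarith [hx.1, hx.2]
  simpa [Real.volume_Ioc, ENNReal.toReal_ofReal (sub_nonneg.mpr h), smul_eq_mul, mul_comm, max_eq_left (sub_nonneg.mpr h)] using this

lemma t_exp_deriv : ∀ x ∈ Set.Ici (0:ℝ), HasDerivAt (fun t : ℝ => -Real.exp (-t ^ 2 / 2))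
    (x * Real.exp (-x ^ 2 / 2)) x := by
  intro x _
  have h : HasDerivAt (fun t : ℝ => -t ^ 2 / 2) (-x) x := by
    have := ((hasDerivAt_pow 2 x).neg).div_const 2
    simpa using this.congr_deriv (by ring)
  have := (h.exp).neg
  exact this.congr_deriv (by ring)

lemma t_exp_tendsto : Tendsto (fun t : ℝ => -Real.exp (-t ^ 2 / 2)) atTop (nhds 0) := by
  rw [show (0:ℝ) = -0 by ring]
  apply Tendsto.neg
  apply Real.tendsto_exp_atBot.comp
  apply Filter.Tendsto.atBot_div_const (by norm_num)
  apply tendsto_neg_atBot_iff.mpr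
  exact tendsto_pow_atTop (by norm_num)

lemma t_exp_integral {c : ℝ} (hc : 0 ≤ c) :
    ∫ t in Set.Ioi c, t * Real.exp (-t ^ 2 / 2) = Real.exp (-c ^ 2 / 2) := by
  have h := integral_Ioi_of_hasDerivAt_of_nonneg'
    (g := fun t : ℝ => -Real.exp (-t ^ 2 / 2)) (g' := fun t => t * Real.exp (-t ^ 2 / 2))
    (fun x hx => t_exp_deriv x (Set.mem_of_mem_of_subset hx (Set.Ici_subset_Ici.mpr hc)))
    (fun x hx => by have : 0 < x := lt_of_le_of_lt hc hx; positivity)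
    t_exp_tendsto
  rw [h]; ring

lemma t_exp_integrable {c : ℝ} (hc : 0 ≤ c) :
    IntegrableOn (fun t => t * Real.exp (-t ^ 2 / 2)) (Set.Ioi c) := by
  exact integrableOn_Ioi_deriv_of_nonneg'
    (fun x hx => t_exp_deriv x (Set.mem_of_mem_of_subset hx (Set.Ici_subset_Ici.mpr hc)))
    (fun x hx => by have : 0 < x := lt_of_le_of_lt hc hx; positivity)
    t_exp_tendsto

lemma mill {c : ℝ} (hc : 0 < c) :
    ∫ t in Set.Ioi c, Real.exp (-t ^ 2 / 2) ≤ Real.exp (-c ^ 2 / 2) / c := by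
  have h : ∫ t in Set.Ioi c, Real.exp (-t ^ 2 / 2)
      ≤ ∫ t in Set.Ioi c, (t / c) * Real.exp (-t ^ 2 / 2) := by
    apply setIntegral_mono_on g_integrable.integrableOn ?_ measurableSet_Ioi ?_
    · have := (t_exp_integrable hc.le).div_const c
      refine this.congr ?_
      filter_upwards with x using by ring
    · intro x hx
      rw [Set.mem_Ioi] at hx
      have h1 : (1:ℝ) ≤ x / c := (le_div_iff₀ hc).mpr (by linarith)
      nlinarith [Real.exp_pos (-x^2/2), Real.exp_pos (-x^2/2)]
  calc ∫ t in Set.Ioi c, Real.exp (-t ^ 2 / 2) ≤ ∫ t in Set.Ioi c, (t/c) * Real.exp (-t ^ 2 / 2) := h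
    _ = (∫ t in Set.Ioi c, t * Real.exp (-t ^ 2 / 2)) / c := by
        rw [← integral_div]; congr 1; funext t; ring
    _ = Real.exp (-c ^ 2 / 2) / c := by rw [t_exp_integral hc.le]

lemma id1 (E s K a : ℝ) (hs : s ≠ 0) (ha : a ≠ 0) :
    (E / (2 * s)) * (K - E * s / a) - E * s / a
      = E * (a * K - s * E - 2 * s ^ 2) / (2 * s * a) := by
  field_simp

lemma arith1 (a s K E : ℝ) (hs2 : s ^ 2 = 2) (hs : 1.414 ≤ s) (hsle : s ≤ 1.415)
    (hK : 2.506 ≤ K) (hE : 0.367 ≤ E) (ha : 0 < a) (ha2 : a ≤ 2) :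
    (a - a * s / 2) * (2 * s) ≤ K / 2 + a * s / 2 * E := by
  have h1 : (a - a * s / 2) * (2 * s) = 2 * a * s - a * s ^ 2 := by ring
  rw [h1, hs2]
  nlinarith [mul_nonneg ha.le (sub_nonneg.mpr hsle),
    mul_nonneg (mul_nonneg ha.le (sub_nonneg.mpr hs)) (sub_nonneg.mpr hE),
    mul_nonneg ha.le (sub_nonneg.mpr hE),
    mul_nonneg ha.le (sub_nonneg.mpr hs)]

lemma arith2 (a s K E : ℝ) (hs : 0 ≤ s) (hsle : s ≤ 1.415) (hK : 2.506 ≤ K)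
    (hE : 0 < E) (hE368 : E ≤ 0.368) (ha : 2 ≤ a) : 4 ≤ a * K - s * E := by
  nlinarith [mul_nonneg (by linarith : (0:ℝ) ≤ a - 2) (by linarith : (0:ℝ) ≤ K - 2.506),
    mul_nonneg hs (by linarith : (0:ℝ) ≤ 0.368 - E),
    mul_nonneg (by linarith : (0:ℝ) ≤ 1.415 - s) hE.le]

set_option maxHeartbeats 2000000 in
lemma partB (a : ℝ) :
    gaussQ (a / Real.sqrt 2) ≤ gaussQ a +
      (Real.exp (-a ^ 2 / 4) / (2 * Real.sqrt 2)) * (1 - gaussQ (a / Real.sqrt 2)) := by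
  have hs2 : (Real.sqrt 2) ^ 2 = 2 := Real.sq_sqrt (by norm_num)
  have hs2pos : 0 < Real.sqrt 2 := by positivity
  have hs2ge : 1.414 ≤ Real.sqrt 2 := by nlinarith
  have hs2le : Real.sqrt 2 ≤ 1.415 := by nlinarith
  have hterm : 0 ≤ (Real.exp (-a ^ 2 / 4) / (2 * Real.sqrt 2)) * (1 - gaussQ (a / Real.sqrt 2)) := by
    have := gaussQ_le_one (a / Real.sqrt 2)
    have h1 : (0:ℝ) ≤ 1 - gaussQ (a / Real.sqrt 2) := by linarith
    positivity
  rcases le_or_gt a 0 with ha | ha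
  · have h1 : a ≤ a / Real.sqrt 2 := by
      rw [div_eq_mul_inv]
      have hinv : (Real.sqrt 2)⁻¹ ≤ 1 := by
        rw [inv_le_one_iff₀]
        right
        nlinarith
      nlinarith [mul_nonpos_of_nonpos_of_nonneg ha (sub_nonneg.mpr hinv)]
    have := gaussQ_anti h1
    linarith
  · -- a > 0
    set K := Real.sqrt (2 * π) with hKdef
    have hKpos : 0 < K := sqrt2pi_pos
    have hK2 : K ^ 2 = 2 * π := Real.sq_sqrt (by positivity)
    have hKge : 2.506 ≤ K := by nlinarith [Real.pi_gt_d6]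
    set c := a / Real.sqrt 2 with hcdef
    have hcpos : 0 < c := div_pos ha hs2pos
    have hca : c ≤ a := by
      rw [hcdef, div_le_iff₀ hs2pos]
      nlinarith
    have hcE : Real.exp (-c ^ 2 / 2) = Real.exp (-a ^ 2 / 4) := by
      congr 1
      rw [hcdef, div_pow, hs2]
      ring
    set E := Real.exp (-a ^ 2 / 4) with hEdef
    have hEpos : 0 < E := Real.exp_pos _
    have hEle1 : E ≤ 1 := by
      rw [hEdef, show (1:ℝ) = Real.exp 0 by simp]
      apply Real.exp_le_exp.mpr
      nlinarith
    set D := ∫ t in Set.Ioc c a, Real.exp (-t ^ 2 / 2) with hDdef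
    set I := ∫ t in Set.Iic c, Real.exp (-t ^ 2 / 2) with hIdef
    clear_value K c E D I
    have hdiff : gaussQ c - gaussQ a = (1/K) * D := by
      rw [gaussQ_eq, gaussQ_eq, ← hKdef, ← mul_sub]
      congr 1
      have := g_split hca
      rw [← hDdef] at this
      linarith
    have hone : 1 - gaussQ c = (1/K) * I := by
      rw [gaussQ_eq, ← hKdef]
      have := g_split_compl c
      rw [← hIdef] at this
      field_simp
      simp only [neg_div] at this
      linarith [hKdef]
    rw [show gaussQ a + E / (2 * Real.sqrt 2) * (1 - gaussQ c)
        = gaussQ a + (E / (2 * Real.sqrt 2)) * ((1/K) * I) by rw [← hone]]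
    have hmain : D ≤ (E / (2 * Real.sqrt 2)) * I → gaussQ c ≤ gaussQ a + (E / (2 * Real.sqrt 2)) * ((1/K) * I) := by
      intro h
      have h2 : (1/K) * D ≤ (E / (2 * Real.sqrt 2)) * ((1/K) * I) := by
        rw [show (E / (2 * Real.sqrt 2)) * ((1/K) * I) = (1/K) * ((E / (2 * Real.sqrt 2)) * I) by ring]
        apply mul_le_mul_of_nonneg_left h (by positivity)
      linarith [hdiff ▸ h2]
    apply hmain
    rcases le_or_gt a 2 with ha2 | ha2
    · -- small a
      have hEe : Real.exp (-1 : ℝ) ≤ E := by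
        rw [hEdef]
        apply Real.exp_le_exp.mpr
        nlinarith
      have hee : (0.367 : ℝ) ≤ Real.exp (-1 : ℝ) := by
        rw [Real.exp_neg]
        have h1 : Real.exp 1 ≤ 2.7182818286 := le_of_lt Real.exp_one_lt_d9
        have h2 : (2.7182818286 : ℝ)⁻¹ ≤ (Real.exp 1)⁻¹ :=
          inv_anti₀ (Real.exp_pos 1) h1
        nlinarith [Real.exp_pos 1]
      -- D ≤ (a - c) * E
      have hD : D ≤ (a - c) * E := by
        rw [hDdef]
        apply g_Ioc_le hcpos.le hca
        rw [hcE]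
      -- I ≥ K/2 + c * E
      have hI : K / 2 + c * E ≤ I := by
        have hsplit : I = (∫ t in Set.Iic (0:ℝ), Real.exp (-t ^ 2 / 2))
            + ∫ t in Set.Ioc (0:ℝ) c, Real.exp (-t ^ 2 / 2) := by
          rw [hIdef, ← setIntegral_union (Set.Iic_disjoint_Ioc le_rfl) measurableSet_Ioc
            g_integrable.integrableOn g_integrable.integrableOn, Set.Iic_union_Ioc_eq_Iic hcpos.le]
        have hlow : c * E ≤ ∫ t in Set.Ioc (0:ℝ) c, Real.exp (-t ^ 2 / 2) := by
          have := g_Ioc_ge hcpos.le E (by rw [hcE]) le_rfl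
          simpa using this
        rw [hsplit, g_Iic_zero, ← hKdef]
        linarith
      -- combine
      have hgoal : (a - c) * E ≤ (E / (2 * Real.sqrt 2)) * (K / 2 + c * E) := by
        rw [show (E / (2 * Real.sqrt 2)) * (K / 2 + c * E)
            = E * ((K / 2 + c * E) / (2 * Real.sqrt 2)) by ring,
          show (a - c) * E = E * (a - c) by ring]
        apply mul_le_mul_of_nonneg_left _ hEpos.le
        rw [le_div_iff₀ (by positivity)]
        have hc2 : c = a * Real.sqrt 2 / 2 := by
          rw [hcdef]
          rw [div_eq_div_iff hs2pos.ne' two_ne_zero]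
          linear_combination (-a) * hs2
        rw [hc2]
        have hE37 : (0.367 : ℝ) ≤ E := le_trans hee hEe
        exact arith1 a (Real.sqrt 2) K E hs2 hs2ge hs2le hKge hE37 ha ha2
      calc D ≤ (a - c) * E := hD
        _ ≤ (E / (2 * Real.sqrt 2)) * (K / 2 + c * E) := hgoal
        _ ≤ (E / (2 * Real.sqrt 2)) * I := by
            apply mul_le_mul_of_nonneg_left hI (by positivity)
    · -- large a
      have hEe : E ≤ Real.exp (-1 : ℝ) := by
        rw [hEdef]
        apply Real.exp_le_exp.mpr
        nlinarith
      have hee : Real.exp (-1 : ℝ) ≤ 0.368 := by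
        rw [Real.exp_neg]
        have h1 : (2.7182818283 : ℝ) < Real.exp 1 := Real.exp_one_gt_d9
        have h2 : (Real.exp 1)⁻¹ ≤ (2.7182818283 : ℝ)⁻¹ := by
          apply inv_anti₀ (by norm_num) h1.le
        calc (Real.exp 1)⁻¹ ≤ (2.7182818283 : ℝ)⁻¹ := h2
          _ ≤ 0.368 := by norm_num
      have hE368 : E ≤ 0.368 := le_trans hEe hee
      have hmill := mill hcpos
      rw [hcE] at hmill
      have hIoiNonneg : (0:ℝ) ≤ ∫ t in Set.Ioi a, Real.exp (-t ^ 2 / 2) :=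
        setIntegral_nonneg measurableSet_Ioi (fun _ _ => (Real.exp_pos _).le)
      have hsplit := g_split hca
      have hD : D ≤ E / c := by
        rw [hDdef]
        linarith
      have hIc := g_split_compl c
      have hI : K - E / c ≤ I := by
        rw [hIdef]
        linarith
      have h4 : 4 ≤ a * K - Real.sqrt 2 * E :=
        arith2 a (Real.sqrt 2) K E hs2pos.le hs2le hKge hEpos hE368 ha2.le
      have hEc : E / c = E * Real.sqrt 2 / a := by
        rw [hcdef, div_div_eq_mul_div]
      have hkey : E / c ≤ (E / (2 * Real.sqrt 2)) * (K - E / c) := by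
        rw [hEc]
        have hid := id1 E (Real.sqrt 2) K a hs2pos.ne' ha.ne' 
        rw [hs2] at hid
        have hnum : (0:ℝ) ≤ E * (a * K - Real.sqrt 2 * E - 2 * 2) / (2 * Real.sqrt 2 * a) := by
          apply div_nonneg (mul_nonneg hEpos.le (by linarith))
            (mul_nonneg (by positivity) ha.le)
        linarith
      calc D ≤ E / c := hD
        _ ≤ (E / (2 * Real.sqrt 2)) * (K - E / c) := hkey
        _ ≤ (E / (2 * Real.sqrt 2)) * I := by
            apply mul_le_mul_of_nonneg_left hI (by positivity)

theorem smoothed_Q_bound (a : ℝ) :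
    (1 / Real.sqrt (2 * π)) * ∫ x : ℝ, gaussQ x * Real.exp (-(x - a) ^ 2 / 2) ≤
      gaussQ a + (Real.exp (-a ^ 2 / 4) / (2 * Real.sqrt 2)) * (1 - gaussQ (a / Real.sqrt 2)) := by
  rw [partA]
  exact partB a
end

section
/- For d ∈ {0,1,2,3} and β > 0, the sum S_d = Σ_{i=0}^{∞} (i/β)^d e^{-i²/(8β²)} satisfies S_0 ≤ √(2π)·β, S_1 ≤ 4β + 4e^{-1/2}, S_2 ≤ 4√(2π)·β + 16e^{-1}, and S_3 ≤ 32β + 48√3·e^{-3/2} (with the convention 0^0 = 0). -/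
open Real

open MeasureTheory Finset


lemma const_le_intervalIntegral (f : ℝ → ℝ) (hc : Continuous f) (a : ℝ) (c : ℝ)
    (h : ∀ x ∈ Set.Icc a (a + 1), c ≤ f x) : c ≤ ∫ x in a..(a + 1), f x := by
  have := intervalIntegral.integral_mono_on (f := fun _ : ℝ => c) (g := f) (μ := volume)
    (by linarith : a ≤ a + 1) intervalIntegrable_const (hc.intervalIntegrable _ _) h
  simpa using this

lemma anti_block (f : ℝ → ℝ) (hc : Continuous f) (a : ℝ)
    (hanti : ∀ x y, a ≤ x → x ≤ y → f y ≤ f x) :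
    ∀ n : ℕ, ∑ i ∈ Finset.range n, f (a + 1 + i) ≤ ∫ x in a..(a + n), f x := by
  intro n
  induction n with
  | zero => simp
  | succ n ih =>
    have hstep : f (a + 1 + n) ≤ ∫ x in (a + n)..(a + n + 1), f x := by
      refine const_le_intervalIntegral f hc (a + n) _ ?_
      intro x hx
      exact hanti x (a + 1 + n) (by nlinarith [hx.1, Nat.cast_nonneg (α := ℝ) n] : a ≤ x) (by linarith [hx.2])
    have hcomb := intervalIntegral.integral_add_adjacent_intervals
      (hc.intervalIntegrable a (a + n)) (hc.intervalIntegrable (a + n) (a + n + 1)) (μ := volume)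
    rw [Finset.sum_range_succ]
    push_cast
    calc (∑ i ∈ Finset.range n, f (a + 1 + i)) + f (a + 1 + n)
        ≤ (∫ x in a..(a + n), f x) + ∫ x in (a + n)..(a + n + 1), f x := add_le_add ih hstep
      _ = ∫ x in a..(a + n + 1), f x := hcomb
      _ = ∫ x in a..(a + (n + 1)), f x := by rw [add_assoc]

lemma mono_block (f : ℝ → ℝ) (hc : Continuous f) (a m : ℝ)
    (hmono : ∀ x y, a ≤ x → x ≤ y → y ≤ m → f x ≤ f y) :
    ∀ n : ℕ, a + n ≤ m → ∑ i ∈ Finset.range n, f (a + i) ≤ ∫ x in a..(a + n), f x := by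
  intro n
  induction n with
  | zero => simp
  | succ n ih =>
    intro hnm
    push_cast at hnm
    have hstep : f (a + n) ≤ ∫ x in (a + n)..(a + n + 1), f x := by
      refine const_le_intervalIntegral f hc (a + n) _ ?_
      intro x hx
      exact hmono (a + n) x (by nlinarith [Nat.cast_nonneg (α := ℝ) n] : a ≤ a + n) hx.1 (by linarith [hx.2])
    have hcomb := intervalIntegral.integral_add_adjacent_intervals
      (hc.intervalIntegrable a (a + n)) (hc.intervalIntegrable (a + n) (a + n + 1)) (μ := volume)
    rw [Finset.sum_range_succ]
    push_cast
    calc (∑ i ∈ Finset.range n, f (a + i)) + f (a + n)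
        ≤ (∫ x in a..(a + n), f x) + ∫ x in (a + n)..(a + n + 1), f x :=
          add_le_add (ih (by push_cast; linarith)) hstep
      _ = ∫ x in a..(a + n + 1), f x := hcomb
      _ = ∫ x in a..(a + (n + 1)), f x := by rw [add_assoc]

lemma integral_split_le (f : ℝ → ℝ) (hc : Continuous f) (hpos : ∀ x, 0 ≤ x → 0 ≤ f x)
    (a b c d : ℝ) (hab : 0 ≤ a) (h1 : a ≤ b) (h2 : b ≤ c) (h3 : c ≤ d) :
    (∫ x in a..b, f x) + (∫ x in c..d, f x) ≤ ∫ x in (0:ℝ)..d, f x := by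
  have i0 : IntervalIntegrable f volume 0 a := hc.intervalIntegrable _ _
  have i1 : IntervalIntegrable f volume a b := hc.intervalIntegrable _ _
  have i2 : IntervalIntegrable f volume b c := hc.intervalIntegrable _ _
  have i3 : IntervalIntegrable f volume c d := hc.intervalIntegrable _ _
  have n0 : 0 ≤ ∫ x in (0:ℝ)..a, f x :=
    intervalIntegral.integral_nonneg hab (fun x hx => hpos x hx.1)
  have n2 : 0 ≤ ∫ x in b..c, f x :=
    intervalIntegral.integral_nonneg h2 (fun x hx => hpos x (by linarith [hx.1]))
  have e1 := intervalIntegral.integral_add_adjacent_intervals i1 i2 (μ := volume)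
  have e2 := intervalIntegral.integral_add_adjacent_intervals (i1.trans i2) i3 (μ := volume)
  have e3 := intervalIntegral.integral_add_adjacent_intervals i0 ((i1.trans i2).trans i3) (μ := volume)
  linarith

lemma unimodal_bound (f : ℝ → ℝ) (hc : Continuous f) (m I M : ℝ) (hm : 0 ≤ m)
    (hpos : ∀ x, 0 ≤ x → 0 ≤ f x)
    (hmono : ∀ x y, 0 ≤ x → x ≤ y → y ≤ m → f x ≤ f y)
    (hanti : ∀ x y, m ≤ x → x ≤ y → f y ≤ f x)
    (hM : ∀ x, 0 ≤ x → f x ≤ M)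
    (hI : ∀ N : ℕ, (∫ x in (0:ℝ)..(N:ℝ), f x) ≤ I) :
    ∀ n : ℕ, ∑ i ∈ Finset.range n, f (i + 1) ≤ I + 2 * M := by
  have hM0 : 0 ≤ M := le_trans (hpos 0 le_rfl) (hM 0 le_rfl)
  set K := ⌊m⌋₊ with hK
  have hKm : (K : ℝ) ≤ m := Nat.floor_le hm
  have hmK : m < (K : ℝ) + 1 := Nat.lt_floor_add_one m
  have key : ∀ j : ℕ, ∑ i ∈ Finset.range (K + 2 + j), f (i + 1) ≤ I + 2 * M := by
    intro j
    match K, hKm, hmK with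
    | 0, hKm, hmK =>
      -- m < 1 : f is antitone on [1, ∞)
      have hanti1 : ∀ x y, (1:ℝ) ≤ x → x ≤ y → f y ≤ f x := by
        intro x y hx hxy; exact hanti x y (by push_cast at hmK; linarith) hxy
      have hsplit : ∑ i ∈ Finset.range (0 + 2 + j), f (i + 1)
          = f 1 + ∑ i ∈ Finset.range (1 + j), f ((1:ℝ) + 1 + i) := by
        have := Finset.sum_range_add (fun i : ℕ => f (i + 1)) 1 (1 + j)
        simp only [show 0 + 2 + j = 1 + (1 + j) by omega] at *
        rw [this]
        simp only [Finset.sum_range_one, Nat.cast_zero, zero_add]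
        congr 1
        refine Finset.sum_congr rfl (fun i _ => ?_)
        push_cast; ring_nf
      rw [hsplit]
      have h1 : f 1 ≤ M := hM 1 (by norm_num)
      have h2 : ∑ i ∈ Finset.range (1 + j), f ((1:ℝ) + 1 + i) ≤ ∫ x in (1:ℝ)..((1:ℝ) + (1 + j : ℕ)), f x :=
        anti_block f hc 1 hanti1 (1 + j)
      have h3 : (∫ x in (1:ℝ)..((1:ℝ) + (1 + j : ℕ)), f x) ≤ ∫ x in (0:ℝ)..((0 + 2 + j : ℕ) : ℝ), f x := by
        have := integral_split_le f hc hpos 1 ((1:ℝ) + (1 + j : ℕ)) ((1:ℝ) + (1 + j : ℕ))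
          ((1:ℝ) + (1 + j : ℕ)) (by norm_num) (by push_cast; linarith) le_rfl le_rfl
        have hz : (∫ x in ((1:ℝ) + (1 + j : ℕ))..((1:ℝ) + (1 + j : ℕ)), f x) = 0 := by simp
        have he : ((0 + 2 + j : ℕ) : ℝ) = (1:ℝ) + (1 + j : ℕ) := by push_cast; ring
        rw [he]; linarith
      have h4 := hI (0 + 2 + j)
      linarith
    | (k + 1), hKm, hmK =>
      -- increasing part range k (values f 1 .. f k), middle f (k+1), f (k+2), tail from k+3
      have hsplit : ∑ i ∈ Finset.range ((k + 1) + 2 + j), f (i + 1)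
          = (∑ i ∈ Finset.range k, f ((1:ℝ) + i)) + (f ((k:ℝ) + 1) + f ((k:ℝ) + 2))
            + ∑ i ∈ Finset.range (1 + j), f (((k:ℝ) + 2) + 1 + i) := by
        have e1 := Finset.sum_range_add (fun i : ℕ => f (i + 1)) k (3 + j)
        have e2 := Finset.sum_range_add (fun i : ℕ => f ((k + i : ℕ) + 1)) 2 (1 + j)
        simp only [show (k + 1) + 2 + j = k + (3 + j) by omega, show 3 + j = 2 + (1 + j) by omega] at *
        have eA : ∑ i ∈ Finset.range k, f ((i:ℝ) + 1) = ∑ i ∈ Finset.range k, f ((1:ℝ) + i) :=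
          Finset.sum_congr rfl (fun i _ => by rw [add_comm])
        have eB : ∑ i ∈ Finset.range 2, f (((k + i : ℕ) : ℝ) + 1) = f ((k:ℝ) + 1) + f ((k:ℝ) + 2) := by
          rw [Finset.sum_range_succ, Finset.sum_range_one]
          push_cast
          congr 2 <;> ring
        have eC : ∑ i ∈ Finset.range (1 + j), f (((k + (2 + i) : ℕ) : ℝ) + 1)
            = ∑ i ∈ Finset.range (1 + j), f (((k:ℝ) + 2) + 1 + i) :=
          Finset.sum_congr rfl (fun i _ => by push_cast; ring_nf)
        rw [e1, e2, eA, eB, eC]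
        ring
      rw [hsplit]
      push_cast at hKm hmK
      have hA : ∑ i ∈ Finset.range k, f ((1:ℝ) + i) ≤ ∫ x in (1:ℝ)..((1:ℝ) + k), f x :=
        mono_block f hc 1 m (fun x y hx hxy hym => hmono x y (by linarith) hxy hym) k
          (by linarith)
      have hB : f ((k:ℝ) + 1) + f ((k:ℝ) + 2) ≤ 2 * M := by
        have := hM ((k:ℝ) + 1) (by positivity)
        have := hM ((k:ℝ) + 2) (by positivity)
        linarith
      have hanti1 : ∀ x y, ((k:ℝ) + 2) ≤ x → x ≤ y → f y ≤ f x := by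
        intro x y hx hxy; exact hanti x y (by linarith) hxy
      have hC : ∑ i ∈ Finset.range (1 + j), f (((k:ℝ) + 2) + 1 + i)
          ≤ ∫ x in ((k:ℝ) + 2)..(((k:ℝ) + 2) + (1 + j : ℕ)), f x :=
        anti_block f hc ((k:ℝ) + 2) hanti1 (1 + j)
      have hD : (∫ x in (1:ℝ)..((1:ℝ) + k), f x) + (∫ x in ((k:ℝ) + 2)..(((k:ℝ) + 2) + (1 + j : ℕ)), f x)
          ≤ ∫ x in (0:ℝ)..(((k + 1) + 2 + j : ℕ) : ℝ), f x := by
        have := integral_split_le f hc hpos 1 ((1:ℝ) + k) ((k:ℝ) + 2) (((k:ℝ) + 2) + (1 + j : ℕ))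
          (by norm_num) (by linarith [Nat.cast_nonneg (α := ℝ) k]) (by push_cast; linarith) (by push_cast; linarith)
        have he : (((k + 1) + 2 + j : ℕ) : ℝ) = ((k:ℝ) + 2) + (1 + j : ℕ) := by push_cast; ring
        rw [he]; linarith
      have h4 := hI ((k + 1) + 2 + j)
      linarith
  intro n
  calc ∑ i ∈ Finset.range n, f (i + 1)
      ≤ ∑ i ∈ Finset.range (K + 2 + n), f (i + 1) := by
        apply Finset.sum_le_sum_of_subset_of_nonneg
        · exact Finset.range_subset_range.2 (by omega)
        · intro i _ _; exact hpos _ (by positivity)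
    _ ≤ I + 2 * M := key n

section
variable (β : ℝ)

lemma hasDerivE (x : ℝ) :
    HasDerivAt (fun x : ℝ => Real.exp (-x^2/(8*β^2)))
      (Real.exp (-x^2/(8*β^2)) * (-(2*x^1)/(8*β^2))) x := by
  have hx2 : HasDerivAt (fun x : ℝ => -x^2/(8*β^2)) (-(2*x^1)/(8*β^2)) x := by
    have := (hasDerivAt_pow 2 x).neg.div_const (8*β^2)
    simpa using this
  exact hx2.exp

lemma hasDeriv1 (hβ : β ≠ 0) (x : ℝ) :
    HasDerivAt (fun x : ℝ => (x/β)^1 * Real.exp (-x^2/(8*β^2)))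
      (Real.exp (-x^2/(8*β^2)) * (4*β^2 - x^2) / (4*β^3)) x := by
  have hq : HasDerivAt (fun x : ℝ => (x/β)^1) ((1:ℕ) * (x/β)^0 * (1/β)) x := by
    have : HasDerivAt (fun x : ℝ => x/β) (1/β) x := by
      simpa using (hasDerivAt_id x).div_const β
    exact this.pow 1
  have : HasDerivAt (fun x : ℝ => (x/β)^1 * Real.exp (-x^2/(8*β^2))) _ x := hq.mul (hasDerivE β x)
  convert this using 1
  field_simp
  ring

lemma hasDeriv2 (hβ : β ≠ 0) (x : ℝ) :
    HasDerivAt (fun x : ℝ => (x/β)^2 * Real.exp (-x^2/(8*β^2)))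
      (Real.exp (-x^2/(8*β^2)) * (x * (8*β^2 - x^2)) / (4*β^4)) x := by
  have hq : HasDerivAt (fun x : ℝ => (x/β)^2) ((2:ℕ) * (x/β)^1 * (1/β)) x := by
    have : HasDerivAt (fun x : ℝ => x/β) (1/β) x := by
      simpa using (hasDerivAt_id x).div_const β
    exact this.pow 2
  have : HasDerivAt (fun x : ℝ => (x/β)^2 * Real.exp (-x^2/(8*β^2))) _ x := hq.mul (hasDerivE β x)
  convert this using 1
  field_simp
  ring

lemma hasDeriv3 (hβ : β ≠ 0) (x : ℝ) :
    HasDerivAt (fun x : ℝ => (x/β)^3 * Real.exp (-x^2/(8*β^2)))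
      (Real.exp (-x^2/(8*β^2)) * (x^2 * (12*β^2 - x^2)) / (4*β^5)) x := by
  have hq : HasDerivAt (fun x : ℝ => (x/β)^3) ((3:ℕ) * (x/β)^2 * (1/β)) x := by
    have : HasDerivAt (fun x : ℝ => x/β) (1/β) x := by
      simpa using (hasDerivAt_id x).div_const β
    exact this.pow 3
  have : HasDerivAt (fun x : ℝ => (x/β)^3 * Real.exp (-x^2/(8*β^2))) _ x := hq.mul (hasDerivE β x)
  convert this using 1
  field_simp
  ring

end

lemma mono_of_deriv (f D : ℝ → ℝ) (hd : ∀ x, HasDerivAt f (D x) x) (m : ℝ)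
    (hsign : ∀ x, 0 < x → x < m → 0 ≤ D x) :
    ∀ x y, 0 ≤ x → x ≤ y → y ≤ m → f x ≤ f y := by
  have hdiff : Differentiable ℝ f := fun x => (hd x).differentiableAt
  have h := monotoneOn_of_deriv_nonneg (convex_Icc 0 m) hdiff.continuous.continuousOn
    hdiff.differentiableOn (fun x hx => by
      rw [interior_Icc] at hx
      rw [(hd x).deriv]
      exact hsign x hx.1 hx.2)
  intro x y hx hxy hym
  exact h ⟨hx, le_trans hxy hym⟩ ⟨le_trans hx hxy, hym⟩ hxy

lemma anti_of_deriv (f D : ℝ → ℝ) (hd : ∀ x, HasDerivAt f (D x) x) (m : ℝ)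
    (hsign : ∀ x, m < x → D x ≤ 0) :
    ∀ x y, m ≤ x → x ≤ y → f y ≤ f x := by
  have hdiff : Differentiable ℝ f := fun x => (hd x).differentiableAt
  have h := antitoneOn_of_deriv_nonpos (convex_Ici m) hdiff.continuous.continuousOn
    hdiff.differentiableOn (fun x hx => by
      rw [interior_Ici] at hx
      rw [(hd x).deriv]
      exact hsign x hx)
  intro x y hx hxy
  exact h hx (le_trans hx hxy) hxy

lemma int0 (β : ℝ) (hβ : 0 < β) (N : ℕ) :
    ∫ x in (0:ℝ)..(N:ℝ), Real.exp (-x^2/(8*β^2)) ≤ Real.sqrt (2*π) * β := by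
  have hb : 0 < (8*β^2)⁻¹ := by positivity
  have hrw : ∀ x : ℝ, -x^2/(8*β^2) = -(8*β^2)⁻¹ * x^2 := by intro x; ring
  simp_rw [hrw]
  rw [intervalIntegral.integral_of_le (Nat.cast_nonneg N)]
  have hint : IntegrableOn (fun x : ℝ => Real.exp (-(8*β^2)⁻¹ * x^2)) (Set.Ioi 0) volume :=
    (integrable_exp_neg_mul_sq hb).integrableOn
  have hmono : (∫ x in Set.Ioc (0:ℝ) (N:ℝ), Real.exp (-(8*β^2)⁻¹ * x^2))
      ≤ ∫ x in Set.Ioi (0:ℝ), Real.exp (-(8*β^2)⁻¹ * x^2) := by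
    apply setIntegral_mono_set hint
    · filter_upwards with x using (Real.exp_pos _).le
    · exact Filter.Eventually.of_forall (fun x hx => hx.1)
  have hgauss := integral_gaussian_Ioi ((8*β^2)⁻¹)
  have heq : Real.sqrt (π / (8*β^2)⁻¹) / 2 = Real.sqrt (2*π) * β := by
    rw [show π / (8*β^2)⁻¹ = (2*π) * (2*β)^2 by field_simp; ring]
    rw [Real.sqrt_mul (by positivity), Real.sqrt_sq (by positivity)]
    ring
  calc (∫ x in Set.Ioc (0:ℝ) (N:ℝ), Real.exp (-(8*β^2)⁻¹ * x^2))
      ≤ ∫ x in Set.Ioi (0:ℝ), Real.exp (-(8*β^2)⁻¹ * x^2) := hmono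
    _ = Real.sqrt (2*π) * β := by rw [hgauss]; exact heq

lemma int1 (β : ℝ) (hβ : 0 < β) (N : ℕ) :
    ∫ x in (0:ℝ)..(N:ℝ), (x/β)^1 * Real.exp (-x^2/(8*β^2)) ≤ 4*β := by
  have hF : ∀ x : ℝ, HasDerivAt (fun x : ℝ => -4*β*Real.exp (-x^2/(8*β^2)))
      ((x/β)^1 * Real.exp (-x^2/(8*β^2))) x := by
    intro x
    have : HasDerivAt (fun x : ℝ => -4*β*Real.exp (-x^2/(8*β^2))) _ x := (hasDerivE β x).const_mul (-4*β)
    convert this using 1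
    field_simp
    ring
  have hFTC := intervalIntegral.integral_eq_sub_of_hasDerivAt
    (fun x (_ : x ∈ Set.uIcc (0:ℝ) (N:ℝ)) => hF x)
    (Continuous.intervalIntegrable (by continuity) _ _)
  rw [hFTC]
  have h1 : 0 < Real.exp (-(N:ℝ)^2/(8*β^2)) := Real.exp_pos _
  have h0 : Real.exp (-(0:ℝ)^2/(8*β^2)) = 1 := by norm_num
  rw [h0]
  nlinarith

lemma int2 (β : ℝ) (hβ : 0 < β) (N : ℕ) :
    ∫ x in (0:ℝ)..(N:ℝ), (x/β)^2 * Real.exp (-x^2/(8*β^2)) ≤ 4 * Real.sqrt (2*π) * β := by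
  have hF : ∀ x : ℝ, HasDerivAt (fun x : ℝ => 4*x*Real.exp (-x^2/(8*β^2)))
      (4*Real.exp (-x^2/(8*β^2)) - (x/β)^2 * Real.exp (-x^2/(8*β^2))) x := by
    intro x
    have h : HasDerivAt (fun y : ℝ => 4*(id y * Real.exp (-y^2/(8*β^2)))) _ x := ((hasDerivAt_id x).mul (hasDerivE β x)).const_mul (4:ℝ)
    have h2 : (fun y : ℝ => 4*(id y * Real.exp (-y^2/(8*β^2))))
        = (fun y : ℝ => 4*y*Real.exp (-y^2/(8*β^2))) := by
      funext y; simp only [id_eq]; ring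
    rw [h2] at h
    simp only [id_eq] at h
    convert h using 1
    field_simp
    ring
  have hFTC := intervalIntegral.integral_eq_sub_of_hasDerivAt (fun x (_ : x ∈ Set.uIcc (0:ℝ) (N:ℝ)) => hF x)
    (Continuous.intervalIntegrable (by continuity) _ _)
  have hsub : (∫ x in (0:ℝ)..(N:ℝ), (4*Real.exp (-x^2/(8*β^2)) - (x/β)^2 * Real.exp (-x^2/(8*β^2))))
      = (∫ x in (0:ℝ)..(N:ℝ), 4*Real.exp (-x^2/(8*β^2)))
        - ∫ x in (0:ℝ)..(N:ℝ), (x/β)^2 * Real.exp (-x^2/(8*β^2)) :=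
    intervalIntegral.integral_sub (Continuous.intervalIntegrable (by continuity) _ _)
      (Continuous.intervalIntegrable (by continuity) _ _)
  have hconst : (∫ x in (0:ℝ)..(N:ℝ), 4*Real.exp (-x^2/(8*β^2)))
      = 4 * ∫ x in (0:ℝ)..(N:ℝ), Real.exp (-x^2/(8*β^2)) := by
    rw [← intervalIntegral.integral_const_mul]
  have hFN : 0 ≤ 4*(N:ℝ)*Real.exp (-(N:ℝ)^2/(8*β^2)) := by positivity
  have h0 := int0 β hβ N
  rw [hsub, hconst] at hFTC
  nlinarith

lemma int3 (β : ℝ) (hβ : 0 < β) (N : ℕ) :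
    ∫ x in (0:ℝ)..(N:ℝ), (x/β)^3 * Real.exp (-x^2/(8*β^2)) ≤ 32*β := by
  have hF : ∀ x : ℝ, HasDerivAt (fun x : ℝ => (-4*x^2/β - 32*β) * Real.exp (-x^2/(8*β^2)))
      ((x/β)^3 * Real.exp (-x^2/(8*β^2))) x := by
    intro x
    have hp : HasDerivAt (fun x : ℝ => -4*x^2/β - 32*β) (-8*x/β) x := by
      have h1 : HasDerivAt (fun x : ℝ => x^2) (2*x) x := by
        simpa using hasDerivAt_pow 2 x
      have : HasDerivAt (fun x : ℝ => -4*x^2/β - 32*β) _ x := ((h1.const_mul (-4:ℝ)).div_const β).sub_const (32*β)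
      convert this using 1
      ring
    have : HasDerivAt (fun x : ℝ => (-4*x^2/β - 32*β) * Real.exp (-x^2/(8*β^2))) _ x := hp.mul (hasDerivE β x)
    convert this using 1
    have hb : β ≠ 0 := ne_of_gt hβ
    field_simp
    ring
  have hFTC := intervalIntegral.integral_eq_sub_of_hasDerivAt
    (fun x (_ : x ∈ Set.uIcc (0:ℝ) (N:ℝ)) => hF x)
    (Continuous.intervalIntegrable (by fun_prop) _ _)
  rw [hFTC]
  have h1 : 0 < Real.exp (-(N:ℝ)^2/(8*β^2)) := Real.exp_pos _
  have h0 : Real.exp (-(0:ℝ)^2/(8*β^2)) = 1 := by norm_num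
  rw [h0]
  have hN : (0:ℝ) ≤ (N:ℝ) := Nat.cast_nonneg N
  have hfac : -4*(N:ℝ)^2/β - 32*β ≤ 0 := by
    have he : -4*(N:ℝ)^2/β - 32*β = -(4*(N:ℝ)^2/β + 32*β) := by ring
    rw [he, neg_nonpos]
    positivity
  have key : (-4*(N:ℝ)^2/β - 32*β) * Real.exp (-(N:ℝ)^2/(8*β^2)) ≤ 0 :=
    mul_nonpos_of_nonpos_of_nonneg hfac h1.le
  rw [show (-4 * (0:ℝ) ^ 2 / β - 32 * β) = -(32*β) by norm_num]
  linarith [key]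

section
variable (β : ℝ)

/-- d = 1 facts -/
lemma mono1 (hβ : 0 < β) : ∀ x y, 0 ≤ x → x ≤ y → y ≤ 2*β →
    (x/β)^1 * Real.exp (-x^2/(8*β^2)) ≤ (y/β)^1 * Real.exp (-y^2/(8*β^2)) := by
  apply mono_of_deriv _ _ (hasDeriv1 β (ne_of_gt hβ))
  intro x hx hxm
  apply div_nonneg (mul_nonneg (Real.exp_pos _).le (by nlinarith)) (by positivity)

lemma anti1 (hβ : 0 < β) : ∀ x y, 2*β ≤ x → x ≤ y →
    (y/β)^1 * Real.exp (-y^2/(8*β^2)) ≤ (x/β)^1 * Real.exp (-x^2/(8*β^2)) := by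
  apply anti_of_deriv _ _ (hasDeriv1 β (ne_of_gt hβ))
  intro x hxm
  apply div_nonpos_of_nonpos_of_nonneg _ (by positivity)
  exact mul_nonpos_of_nonneg_of_nonpos (Real.exp_pos _).le (by nlinarith)

lemma max1 (hβ : 0 < β) : ∀ x, 0 ≤ x → (x/β)^1 * Real.exp (-x^2/(8*β^2)) ≤ 2 * Real.exp (-1/2) := by
  intro x hx
  have hb : β ≠ 0 := ne_of_gt hβ
  have hfm : (2*β/β)^1 * Real.exp (-(2*β)^2/(8*β^2)) = 2 * Real.exp (-1/2 : ℝ) := by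
    rw [show -(2*β)^2/(8*β^2) = (-1/2 : ℝ) by field_simp; ring,
      show 2*β/β = 2 by field_simp]
    norm_num
  rcases le_total x (2*β) with h | h
  · calc (x/β)^1 * Real.exp (-x^2/(8*β^2)) ≤ (2*β/β)^1 * Real.exp (-(2*β)^2/(8*β^2)) :=
        mono1 β hβ x (2*β) hx h le_rfl
      _ = 2 * Real.exp (-1/2) := hfm
  · calc (x/β)^1 * Real.exp (-x^2/(8*β^2)) ≤ (2*β/β)^1 * Real.exp (-(2*β)^2/(8*β^2)) :=
        anti1 β hβ (2*β) x le_rfl h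
      _ = 2 * Real.exp (-1/2) := hfm

/-- d = 2 facts -/
lemma sq8 : (Real.sqrt 8)^2 = 8 := Real.sq_sqrt (by norm_num)

lemma mono2 (hβ : 0 < β) : ∀ x y, 0 ≤ x → x ≤ y → y ≤ Real.sqrt 8 * β →
    (x/β)^2 * Real.exp (-x^2/(8*β^2)) ≤ (y/β)^2 * Real.exp (-y^2/(8*β^2)) := by
  apply mono_of_deriv _ _ (hasDeriv2 β (ne_of_gt hβ))
  intro x hx hxm
  have h8 : x^2 < 8*β^2 := by nlinarith [sq8, Real.sqrt_nonneg 8]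
  apply div_nonneg (mul_nonneg (Real.exp_pos _).le (by nlinarith)) (by positivity)

lemma anti2 (hβ : 0 < β) : ∀ x y, Real.sqrt 8 * β ≤ x → x ≤ y →
    (y/β)^2 * Real.exp (-y^2/(8*β^2)) ≤ (x/β)^2 * Real.exp (-x^2/(8*β^2)) := by
  apply anti_of_deriv _ _ (hasDeriv2 β (ne_of_gt hβ))
  intro x hxm
  have hx : 0 < x := lt_of_le_of_lt (by positivity) hxm
  have h8 : 8*β^2 < x^2 := by
    have key := mul_pos (sub_pos.2 hxm) (add_pos hx (show (0:ℝ) < Real.sqrt 8*β by positivity))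
    nlinarith [key, sq8, sq_nonneg β, hβ]
  apply div_nonpos_of_nonpos_of_nonneg _ (by positivity)
  exact mul_nonpos_of_nonneg_of_nonpos (Real.exp_pos _).le
    (mul_nonpos_of_nonneg_of_nonpos hx.le (by nlinarith))

lemma max2 (hβ : 0 < β) : ∀ x, 0 ≤ x → (x/β)^2 * Real.exp (-x^2/(8*β^2)) ≤ 8 * Real.exp (-1) := by
  intro x hx
  have hb : β ≠ 0 := ne_of_gt hβ
  have hfm : (Real.sqrt 8*β/β)^2 * Real.exp (-(Real.sqrt 8*β)^2/(8*β^2)) = 8 * Real.exp (-1 : ℝ) := by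
    rw [show Real.sqrt 8*β/β = Real.sqrt 8 by field_simp]
    rw [show -(Real.sqrt 8*β)^2/(8*β^2) = (-1 : ℝ) by rw [mul_pow, sq8]; field_simp]
    rw [sq8]
  rcases le_total x (Real.sqrt 8 * β) with h | h
  · calc (x/β)^2 * Real.exp (-x^2/(8*β^2))
        ≤ (Real.sqrt 8*β/β)^2 * Real.exp (-(Real.sqrt 8*β)^2/(8*β^2)) :=
        mono2 β hβ x _ hx h le_rfl
      _ = 8 * Real.exp (-1) := hfm
  · calc (x/β)^2 * Real.exp (-x^2/(8*β^2))
        ≤ (Real.sqrt 8*β/β)^2 * Real.exp (-(Real.sqrt 8*β)^2/(8*β^2)) :=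
        anti2 β hβ _ x le_rfl h
      _ = 8 * Real.exp (-1) := hfm

/-- d = 3 facts -/
lemma sq12 : (Real.sqrt 12)^2 = 12 := Real.sq_sqrt (by norm_num)

lemma mono3 (hβ : 0 < β) : ∀ x y, 0 ≤ x → x ≤ y → y ≤ Real.sqrt 12 * β →
    (x/β)^3 * Real.exp (-x^2/(8*β^2)) ≤ (y/β)^3 * Real.exp (-y^2/(8*β^2)) := by
  apply mono_of_deriv _ _ (hasDeriv3 β (ne_of_gt hβ))
  intro x hx hxm
  have h12 : x^2 < 12*β^2 := by nlinarith [sq12, Real.sqrt_nonneg 12]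
  apply div_nonneg (mul_nonneg (Real.exp_pos _).le (by nlinarith)) (by positivity)

lemma anti3 (hβ : 0 < β) : ∀ x y, Real.sqrt 12 * β ≤ x → x ≤ y →
    (y/β)^3 * Real.exp (-y^2/(8*β^2)) ≤ (x/β)^3 * Real.exp (-x^2/(8*β^2)) := by
  apply anti_of_deriv _ _ (hasDeriv3 β (ne_of_gt hβ))
  intro x hxm
  have hx : 0 < x := lt_of_le_of_lt (by positivity) hxm
  have h12 : 12*β^2 < x^2 := by
    have key := mul_pos (sub_pos.2 hxm) (add_pos hx (show (0:ℝ) < Real.sqrt 12*β by positivity))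
    nlinarith [key, sq12, sq_nonneg β, hβ]
  apply div_nonpos_of_nonpos_of_nonneg _ (by positivity)
  exact mul_nonpos_of_nonneg_of_nonpos (Real.exp_pos _).le
    (mul_nonpos_of_nonneg_of_nonpos (by positivity) (by nlinarith))

lemma sqrt12_eq : Real.sqrt 12 = 2 * Real.sqrt 3 := by
  rw [show (12:ℝ) = 2^2*3 by norm_num, Real.sqrt_mul (by positivity), Real.sqrt_sq (by norm_num)]

lemma max3 (hβ : 0 < β) : ∀ x, 0 ≤ x →
    (x/β)^3 * Real.exp (-x^2/(8*β^2)) ≤ 24 * Real.sqrt 3 * Real.exp (-3/2) := by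
  intro x hx
  have hb : β ≠ 0 := ne_of_gt hβ
  have hfm : (Real.sqrt 12*β/β)^3 * Real.exp (-(Real.sqrt 12*β)^2/(8*β^2))
      = 24 * Real.sqrt 3 * Real.exp (-3/2 : ℝ) := by
    rw [show Real.sqrt 12*β/β = Real.sqrt 12 by field_simp]
    rw [show -(Real.sqrt 12*β)^2/(8*β^2) = (-3/2 : ℝ) by rw [mul_pow, sq12]; field_simp; ring]
    rw [show (Real.sqrt 12)^3 = (Real.sqrt 12)^2 * Real.sqrt 12 by ring, sq12, sqrt12_eq]
    ring
  rcases le_total x (Real.sqrt 12 * β) with h | h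
  · calc (x/β)^3 * Real.exp (-x^2/(8*β^2))
        ≤ (Real.sqrt 12*β/β)^3 * Real.exp (-(Real.sqrt 12*β)^2/(8*β^2)) :=
        mono3 β hβ x _ hx h le_rfl
      _ = 24 * Real.sqrt 3 * Real.exp (-3/2) := hfm
  · calc (x/β)^3 * Real.exp (-x^2/(8*β^2))
        ≤ (Real.sqrt 12*β/β)^3 * Real.exp (-(Real.sqrt 12*β)^2/(8*β^2)) :=
        anti3 β hβ _ x le_rfl h
      _ = 24 * Real.sqrt 3 * Real.exp (-3/2) := hfm

lemma anti0 (hβ : 0 < β) : ∀ x y, (0:ℝ) ≤ x → x ≤ y →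
    Real.exp (-y^2/(8*β^2)) ≤ Real.exp (-x^2/(8*β^2)) := by
  apply anti_of_deriv _ _ (fun x => hasDerivE β x)
  intro x hx
  apply mul_nonpos_of_nonneg_of_nonpos (Real.exp_pos _).le
  apply div_nonpos_of_nonpos_of_nonneg (by nlinarith) (by positivity)

end

theorem gaussian_like_sum_bounds (β : ℝ) (hβ : 0 < β) :
    (∑' i : ℕ, (if i = 0 then (0 : ℝ) else Real.exp (-(i : ℝ) ^ 2 / (8 * β ^ 2))) ≤
        Real.sqrt (2 * π) * β) ∧
    (∑' i : ℕ, ((i : ℝ) / β) ^ 1 * Real.exp (-(i : ℝ) ^ 2 / (8 * β ^ 2)) ≤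
        4 * β + 4 * Real.exp (-1 / 2)) ∧
    (∑' i : ℕ, ((i : ℝ) / β) ^ 2 * Real.exp (-(i : ℝ) ^ 2 / (8 * β ^ 2)) ≤
        4 * Real.sqrt (2 * π) * β + 16 * Real.exp (-1)) ∧
    (∑' i : ℕ, ((i : ℝ) / β) ^ 3 * Real.exp (-(i : ℝ) ^ 2 / (8 * β ^ 2)) ≤
        32 * β + 48 * Real.sqrt 3 * Real.exp (-3 / 2)) := by
  have hE : (0:ℝ) < Real.exp (-1/2) := Real.exp_pos _
  have hE1 : (0:ℝ) < Real.exp (-1 : ℝ) := Real.exp_pos _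
  have hE3 : (0:ℝ) < Real.exp (-3/2 : ℝ) := Real.exp_pos _
  have hs3 : (0:ℝ) < Real.sqrt 3 := by positivity
  have hs2pi : (0:ℝ) ≤ Real.sqrt (2*π) := Real.sqrt_nonneg _
  refine ⟨?_, ?_, ?_, ?_⟩
  · -- d = 0
    apply Real.tsum_le_of_sum_range_le
    · intro n
      split
      · exact le_rfl
      · positivity
    · intro n
      cases n with
      | zero => simp; positivity
      | succ n =>
        rw [Finset.sum_range_succ']
        simp only [Nat.succ_ne_zero, if_false, if_true, Nat.add_eq_zero, if_pos rfl, add_zero,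
          reduceIte]
        have hstep := anti_block (fun x : ℝ => Real.exp (-x^2/(8*β^2))) (by fun_prop) 0
          (anti0 β hβ) n
        have heq : ∑ i ∈ Finset.range n, Real.exp (-((i+1 : ℕ) : ℝ)^2/(8*β^2))
            = ∑ i ∈ Finset.range n, Real.exp (-((1:ℝ)+(i:ℝ))^2/(8*β^2)) :=
          Finset.sum_congr rfl fun i _ => by push_cast; ring_nf
        have hint := int0 β hβ n
        simp only [zero_add] at hstep
        calc ∑ i ∈ Finset.range n, Real.exp (-((i+1 : ℕ) : ℝ)^2/(8*β^2))
            ≤ ∫ x in (0:ℝ)..(n:ℝ), Real.exp (-x^2/(8*β^2)) := by rw [heq]; exact hstep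
          _ ≤ Real.sqrt (2*π) * β := hint
  · -- d = 1
    have hb := unimodal_bound (fun x : ℝ => (x/β)^1 * Real.exp (-x^2/(8*β^2))) (by fun_prop)
      (2*β) (4*β) (2*Real.exp (-1/2)) (by positivity)
      (fun x hx => mul_nonneg (pow_nonneg (div_nonneg hx hβ.le) _) (Real.exp_pos _).le)
      (mono1 β hβ) (anti1 β hβ) (max1 β hβ) (fun N => int1 β hβ N)
    apply Real.tsum_le_of_sum_range_le
    · intro n
      exact mul_nonneg (pow_nonneg (div_nonneg (Nat.cast_nonneg n) hβ.le) _) (Real.exp_pos _).le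
    · intro n
      cases n with
      | zero => simp; nlinarith
      | succ n =>
        rw [Finset.sum_range_succ']
        have heq : ∑ i ∈ Finset.range n, (((i+1:ℕ):ℝ)/β)^1 * Real.exp (-((i+1:ℕ):ℝ)^2/(8*β^2))
            = ∑ i ∈ Finset.range n, (((i:ℝ)+1)/β)^1 * Real.exp (-((i:ℝ)+1)^2/(8*β^2)) :=
          Finset.sum_congr rfl fun i _ => by push_cast; ring_nf
        calc (∑ i ∈ Finset.range n, (((i+1:ℕ):ℝ)/β)^1 * Real.exp (-((i+1:ℕ):ℝ)^2/(8*β^2)))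
              + (((0:ℕ):ℝ)/β)^1 * Real.exp (-((0:ℕ):ℝ)^2/(8*β^2))
            = ∑ i ∈ Finset.range n, (((i:ℝ)+1)/β)^1 * Real.exp (-((i:ℝ)+1)^2/(8*β^2)) := by
              rw [heq]; norm_num
          _ ≤ 4*β + 2*(2*Real.exp (-1/2)) := hb n
          _ ≤ 4*β + 4*Real.exp (-1/2) := by linarith
  · -- d = 2
    have hb := unimodal_bound (fun x : ℝ => (x/β)^2 * Real.exp (-x^2/(8*β^2))) (by fun_prop)
      (Real.sqrt 8*β) (4*Real.sqrt (2*π)*β) (8*Real.exp (-1)) (by positivity)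
      (fun x hx => mul_nonneg (pow_nonneg (div_nonneg hx hβ.le) _) (Real.exp_pos _).le)
      (mono2 β hβ) (anti2 β hβ) (max2 β hβ) (fun N => int2 β hβ N)
    apply Real.tsum_le_of_sum_range_le
    · intro n
      exact mul_nonneg (pow_nonneg (div_nonneg (Nat.cast_nonneg n) hβ.le) _) (Real.exp_pos _).le
    · intro n
      cases n with
      | zero =>
        simp only [Finset.range_zero, Finset.sum_empty]
        nlinarith [mul_nonneg hs2pi hβ.le]
      | succ n =>
        rw [Finset.sum_range_succ']
        have heq : ∑ i ∈ Finset.range n, (((i+1:ℕ):ℝ)/β)^2 * Real.exp (-((i+1:ℕ):ℝ)^2/(8*β^2))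
            = ∑ i ∈ Finset.range n, (((i:ℝ)+1)/β)^2 * Real.exp (-((i:ℝ)+1)^2/(8*β^2)) :=
          Finset.sum_congr rfl fun i _ => by push_cast; ring_nf
        calc (∑ i ∈ Finset.range n, (((i+1:ℕ):ℝ)/β)^2 * Real.exp (-((i+1:ℕ):ℝ)^2/(8*β^2)))
              + (((0:ℕ):ℝ)/β)^2 * Real.exp (-((0:ℕ):ℝ)^2/(8*β^2))
            = ∑ i ∈ Finset.range n, (((i:ℝ)+1)/β)^2 * Real.exp (-((i:ℝ)+1)^2/(8*β^2)) := by
              rw [heq]; norm_num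
          _ ≤ 4*Real.sqrt (2*π)*β + 2*(8*Real.exp (-1)) := hb n
          _ ≤ 4*Real.sqrt (2*π)*β + 16*Real.exp (-1) := by linarith
  · -- d = 3
    have hb := unimodal_bound (fun x : ℝ => (x/β)^3 * Real.exp (-x^2/(8*β^2))) (by fun_prop)
      (Real.sqrt 12*β) (32*β) (24*Real.sqrt 3*Real.exp (-3/2)) (by positivity)
      (fun x hx => mul_nonneg (pow_nonneg (div_nonneg hx hβ.le) _) (Real.exp_pos _).le)
      (mono3 β hβ) (anti3 β hβ) (max3 β hβ) (fun N => int3 β hβ N)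
    apply Real.tsum_le_of_sum_range_le
    · intro n
      exact mul_nonneg (pow_nonneg (div_nonneg (Nat.cast_nonneg n) hβ.le) _) (Real.exp_pos _).le
    · intro n
      cases n with
      | zero => simp; nlinarith
      | succ n =>
        rw [Finset.sum_range_succ']
        have heq : ∑ i ∈ Finset.range n, (((i+1:ℕ):ℝ)/β)^3 * Real.exp (-((i+1:ℕ):ℝ)^2/(8*β^2))
            = ∑ i ∈ Finset.range n, (((i:ℝ)+1)/β)^3 * Real.exp (-((i:ℝ)+1)^2/(8*β^2)) :=
          Finset.sum_congr rfl fun i _ => by push_cast; ring_nf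
        calc (∑ i ∈ Finset.range n, (((i+1:ℕ):ℝ)/β)^3 * Real.exp (-((i+1:ℕ):ℝ)^2/(8*β^2)))
              + (((0:ℕ):ℝ)/β)^3 * Real.exp (-((0:ℕ):ℝ)^2/(8*β^2))
            = ∑ i ∈ Finset.range n, (((i:ℝ)+1)/β)^3 * Real.exp (-((i:ℝ)+1)^2/(8*β^2)) := by
              rw [heq]; norm_num
          _ ≤ 32*β + 2*(24*Real.sqrt 3*Real.exp (-3/2)) := hb n
          _ ≤ 32*β + 48*Real.sqrt 3*Real.exp (-3/2) := by linarith
end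

section
/- For E > 0 and β > 0, the sum Σ_{i=2}^{∞} (i/β)² · (1/2) · e^{-(1/2)(2E β/i + i/(2β))²} is bounded above by (1/2) e^{-E} Σ_{i=0}^{∞} (i/β)² e^{-(1/2)(i/(2β))²} ≤ √(8π)·β·e^{-E}·(1 + 4e^{-1}/(β√(2π))). -/
open Real Set MeasureTheory Filter Topology

noncomputable def Gfun (β : ℝ) : ℝ → ℝ :=
  fun x => (x / β) ^ 2 * Real.exp (-(1 / 2) * (x / (2 * β)) ^ 2)

lemma aux_mono {s t : ℝ} (hs : 0 ≤ s) (hst : s ≤ t) (ht : t ≤ 1) :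
    s * Real.exp (-s) ≤ t * Real.exp (-t) := by
  have h1 : s ≤ t * Real.exp (s - t) := by
    nlinarith [Real.add_one_le_exp (s - t), Real.exp_pos (s - t),
      mul_nonneg (sub_nonneg.2 hst) (sub_nonneg.2 ht)]
  calc s * Real.exp (-s) ≤ (t * Real.exp (s - t)) * Real.exp (-s) :=
        mul_le_mul_of_nonneg_right h1 (Real.exp_pos _).le
    _ = t * Real.exp (-t) := by
        rw [mul_assoc, ← Real.exp_add]; congr 1; ring

lemma aux_anti {s t : ℝ} (hs : 1 ≤ s) (hst : s ≤ t) :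
    t * Real.exp (-t) ≤ s * Real.exp (-s) := by
  have h1 : t ≤ s * Real.exp (t - s) := by
    nlinarith [Real.add_one_le_exp (t - s), Real.exp_pos (t - s),
      mul_nonneg (sub_nonneg.2 hst) (sub_nonneg.2 hs)]
  calc t * Real.exp (-t) ≤ (s * Real.exp (t - s)) * Real.exp (-t) :=
        mul_le_mul_of_nonneg_right h1 (Real.exp_pos _).le
    _ = s * Real.exp (-s) := by
        rw [mul_assoc, ← Real.exp_add]; congr 1; ring

lemma aux_max {t : ℝ} : t * Real.exp (-t) ≤ Real.exp (-1) := by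
  have h := Real.add_one_le_exp (t - 1)
  calc t * Real.exp (-t) ≤ Real.exp (t - 1) * Real.exp (-t) :=
        mul_le_mul_of_nonneg_right (by linarith) (Real.exp_pos _).le
    _ = Real.exp (-1) := by rw [← Real.exp_add]; congr 1; ring

lemma Gfun_eq (β : ℝ) (hβ : 0 < β) (x : ℝ) :
    Gfun β x = 8 * ((x ^ 2 / (8 * β ^ 2)) * Real.exp (-(x ^ 2 / (8 * β ^ 2)))) := by
  have h1 : -(1 / 2) * (x / (2 * β)) ^ 2 = -(x ^ 2 / (8 * β ^ 2)) := by ring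
  have h2 : (x / β) ^ 2 = 8 * (x ^ 2 / (8 * β ^ 2)) := by ring
  rw [Gfun, h1, h2, mul_assoc]

lemma Gfun_nonneg (β : ℝ) (x : ℝ) : 0 ≤ Gfun β x := by
  rw [Gfun]; positivity

lemma Gfun_le (β : ℝ) (hβ : 0 < β) (x : ℝ) : Gfun β x ≤ 8 * Real.exp (-1) := by
  rw [Gfun_eq β hβ]
  have := aux_max (t := x ^ 2 / (8 * β ^ 2))
  nlinarith

lemma Gfun_monoOn (β : ℝ) (hβ : 0 < β) :
    MonotoneOn (Gfun β) (Icc 0 (Real.sqrt 8 * β)) := by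
  intro x hx y hy hxy
  rw [Gfun_eq β hβ, Gfun_eq β hβ]
  have hx0 : 0 ≤ x := hx.1
  have h8 : (Real.sqrt 8 * β) ^ 2 = 8 * β ^ 2 := by
    rw [mul_pow, Real.sq_sqrt (by norm_num : (0:ℝ) ≤ 8)]
  have hy8 : y ^ 2 ≤ 8 * β ^ 2 := by nlinarith [hy.1, hy.2]
  have hst : x ^ 2 / (8 * β ^ 2) ≤ y ^ 2 / (8 * β ^ 2) := by
    have hxy2 : x ^ 2 ≤ y ^ 2 := by nlinarith
    rw [div_eq_mul_inv, div_eq_mul_inv]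
    exact mul_le_mul_of_nonneg_right hxy2 (by positivity)
  have := aux_mono (s := x ^ 2 / (8 * β ^ 2)) (t := y ^ 2 / (8 * β ^ 2))
    (by positivity) hst (by rw [div_le_one (by positivity)]; linarith)
  linarith

lemma Gfun_antiOn (β : ℝ) (hβ : 0 < β) :
    AntitoneOn (Gfun β) (Ici (Real.sqrt 8 * β)) := by
  intro x hx y hy hxy
  rw [Gfun_eq β hβ, Gfun_eq β hβ]
  have h8 : (Real.sqrt 8 * β) ^ 2 = 8 * β ^ 2 := by
    rw [mul_pow, Real.sq_sqrt (by norm_num : (0:ℝ) ≤ 8)]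
  have hx0 : 0 ≤ x := le_trans (by positivity) hx
  have h80 : (0:ℝ) ≤ Real.sqrt 8 * β := by positivity
  have hx1 : 1 ≤ x ^ 2 / (8 * β ^ 2) := by
    rw [le_div_iff₀ (by positivity)]
    have key : (0:ℝ) ≤ (x - Real.sqrt 8 * β) * (x + Real.sqrt 8 * β) :=
      mul_nonneg (by linarith [hx.out]) (by linarith [hx.out])
    nlinarith [key, h8]
  have hst : x ^ 2 / (8 * β ^ 2) ≤ y ^ 2 / (8 * β ^ 2) := by
    have hxy2 : x ^ 2 ≤ y ^ 2 := by nlinarith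
    rw [div_eq_mul_inv, div_eq_mul_inv]
    exact mul_le_mul_of_nonneg_right hxy2 (by positivity)
  have := aux_anti (s := x ^ 2 / (8 * β ^ 2)) (t := y ^ 2 / (8 * β ^ 2)) hx1 hst
  linarith

lemma Gfun_summable (β : ℝ) (hβ : 0 < β) : Summable (fun i : ℕ => Gfun β (i : ℝ)) := by
  set r : ℝ := Real.exp (-(1 / (8 * β ^ 2))) with hr
  have hr1 : ‖r‖ < 1 := by
    rw [Real.norm_eq_abs, abs_of_pos (Real.exp_pos _)]
    rw [Real.exp_lt_one_iff]
    have : (0:ℝ) < 1 / (8 * β ^ 2) := by positivity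
    linarith
  have hbase : Summable (fun n : ℕ => (1 / β ^ 2) * ((n : ℝ) ^ 2 * r ^ n)) :=
    (summable_pow_mul_geometric_of_norm_lt_one 2 hr1).mul_left _
  apply Summable.of_nonneg_of_le (fun (i : ℕ) => Gfun_nonneg β (i : ℝ)) _ hbase
  intro i
  rw [Gfun_eq β hβ]
  have hrn : r ^ i = Real.exp (-((i:ℝ) / (8 * β ^ 2))) := by
    rw [hr, ← Real.exp_nat_mul]
    congr 1
    ring
  rw [hrn]
  have hii : (i : ℝ) ≤ (i : ℝ) ^ 2 := by
    rcases Nat.eq_zero_or_pos i with h | h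
    · simp [h]
    · have : (1:ℝ) ≤ i := by exact_mod_cast h
      nlinarith
  have hexp : Real.exp (-((i:ℝ) ^ 2 / (8 * β ^ 2))) ≤ Real.exp (-((i:ℝ) / (8 * β ^ 2))) := by
    apply Real.exp_le_exp.2
    rw [neg_le_neg_iff, div_eq_mul_inv, div_eq_mul_inv]
    exact mul_le_mul_of_nonneg_right hii (by positivity)
  calc 8 * ((i:ℝ) ^ 2 / (8 * β ^ 2) * Real.exp (-((i:ℝ) ^ 2 / (8 * β ^ 2))))
      ≤ 8 * ((i:ℝ) ^ 2 / (8 * β ^ 2) * Real.exp (-((i:ℝ) / (8 * β ^ 2)))) := by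
        have h0 : (0:ℝ) ≤ (i:ℝ) ^ 2 / (8 * β ^ 2) := by positivity
        nlinarith
    _ = (1 / β ^ 2) * ((i : ℝ) ^ 2 * Real.exp (-((i:ℝ) / (8 * β ^ 2)))) := by
        field_simp

lemma integral_sq_gaussian {b : ℝ} (hb : 0 < b) :
    ∫ x in Ioi (0:ℝ), x ^ 2 * Real.exp (-b * x ^ 2) = Real.sqrt (π / b) / (4 * b) := by
  have hderiv : ∀ x ∈ Ici (0:ℝ), HasDerivAt (fun y : ℝ => y * Real.exp (-b * y ^ 2))
      (Real.exp (-b * x ^ 2) - 2 * b * (x ^ 2 * Real.exp (-b * x ^ 2))) x := by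
    intro x _
    have h1 : HasDerivAt (fun y : ℝ => -b * y ^ 2) (-b * (↑2 * x ^ 1)) x :=
      (hasDerivAt_pow 2 x).const_mul (-b)
    have h2 := h1.exp
    have h3 : HasDerivAt (fun y : ℝ => y * Real.exp (-b * y ^ 2))
        (1 * Real.exp (-b * x ^ 2) + x * (Real.exp (-b * x ^ 2) * (-b * (↑2 * x ^ 1)))) x :=
      (hasDerivAt_id x).fun_mul h2
    convert h3 using 1
    push_cast
    ring
  have hx2int : IntegrableOn (fun x : ℝ => x ^ 2 * Real.exp (-b * x ^ 2)) (Ioi 0) := by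
    have := integrableOn_rpow_mul_exp_neg_mul_sq hb (show (-1:ℝ) < 2 by norm_num)
    simpa [Real.rpow_two] using this
  have hf'int : IntegrableOn
      (fun x : ℝ => Real.exp (-b * x ^ 2) - 2 * b * (x ^ 2 * Real.exp (-b * x ^ 2)))
      (Ioi 0) :=
    ((integrable_exp_neg_mul_sq hb).integrableOn).sub (hx2int.const_mul (2 * b))
  have htend : Tendsto (fun y : ℝ => y * Real.exp (-b * y ^ 2)) atTop (𝓝 0) := by
    have hlim : Tendsto (fun x : ℝ => Real.exp (-(1/2) * x)) atTop (𝓝 0) := by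
      have h1 : Tendsto (fun x : ℝ => (1/2 : ℝ) * x) atTop atTop :=
        Tendsto.const_mul_atTop (by norm_num) tendsto_id
      have h2 : Tendsto (fun x : ℝ => -((1/2 : ℝ) * x)) atTop atBot :=
        tendsto_neg_atTop_atBot.comp h1
      have h3 := Real.tendsto_exp_atBot.comp h2
      have heq2 : (Real.exp ∘ fun x : ℝ => -((1/2 : ℝ) * x)) =
          fun x : ℝ => Real.exp (-(1/2) * x) := by
        funext x; simp [Function.comp, neg_mul]
      rwa [heq2] at h3
    have h := (rpow_mul_exp_neg_mul_sq_isLittleO_exp_neg hb 1).isBigO.trans_tendsto hlim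
    have heq : (fun x : ℝ => x ^ (1:ℝ) * Real.exp (-b * x ^ 2)) =
        fun y : ℝ => y * Real.exp (-b * y ^ 2) := by
      funext x; rw [Real.rpow_one]
    rwa [heq] at h
  have hint := integral_Ioi_of_hasDerivAt_of_tendsto' hderiv hf'int htend
  simp only [mul_zero, zero_mul] at hint
  have hsub : (∫ x in Ioi (0:ℝ),
      (Real.exp (-b * x ^ 2) - 2 * b * (x ^ 2 * Real.exp (-b * x ^ 2)))) =
      (∫ x in Ioi (0:ℝ), Real.exp (-b * x ^ 2)) -
        2 * b * ∫ x in Ioi (0:ℝ), x ^ 2 * Real.exp (-b * x ^ 2) := by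
    rw [integral_sub ((integrable_exp_neg_mul_sq hb).integrableOn) (hx2int.const_mul (2 * b)),
      integral_const_mul]
  rw [hsub, integral_gaussian_Ioi] at hint
  have hb4 : (4 * b) ≠ 0 := by positivity
  field_simp at hint ⊢
  linarith

lemma Gfun_integrableOn (β : ℝ) (hβ : 0 < β) : IntegrableOn (Gfun β) (Ioi 0) := by
  have heq : Gfun β = fun x => (1 / β ^ 2) * (x ^ 2 * Real.exp (-(1/(8*β^2)) * x ^ 2)) := by
    funext x
    rw [Gfun]
    have h1 : -(1 / 2) * (x / (2 * β)) ^ 2 = -(1/(8*β^2)) * x ^ 2 := by ring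
    rw [h1]
    ring
  rw [heq]
  have := integrableOn_rpow_mul_exp_neg_mul_sq (show (0:ℝ) < 1/(8*β^2) by positivity)
    (show (-1:ℝ) < 2 by norm_num)
  have h2 : IntegrableOn (fun x : ℝ => x ^ 2 * Real.exp (-(1/(8*β^2)) * x ^ 2)) (Ioi 0) := by
    simpa [Real.rpow_two] using this
  exact h2.const_mul _

lemma Gfun_integral_Ioi (β : ℝ) (hβ : 0 < β) :
    ∫ x in Ioi (0:ℝ), Gfun β x = 4 * Real.sqrt (2 * π) * β := by
  have heq : ∀ x ∈ Ioi (0:ℝ), Gfun β x =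
      (1 / β ^ 2) * (x ^ 2 * Real.exp (-(1/(8*β^2)) * x ^ 2)) := by
    intro x _
    rw [Gfun]
    have h1 : -(1 / 2) * (x / (2 * β)) ^ 2 = -(1/(8*β^2)) * x ^ 2 := by ring
    rw [h1]
    ring
  rw [setIntegral_congr_fun measurableSet_Ioi heq, integral_const_mul,
    integral_sq_gaussian (show (0:ℝ) < 1/(8*β^2) by positivity)]
  have h1 : π / (1/(8*β^2)) = (2*β)^2 * (2*π) := by field_simp; ring
  rw [h1, Real.sqrt_mul (sq_nonneg _), Real.sqrt_sq (by positivity : (0:ℝ) ≤ 2*β)]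
  have hs : (0:ℝ) ≤ Real.sqrt (2*π) := Real.sqrt_nonneg _
  field_simp
  ring

lemma Gfun_sum_le (β : ℝ) (hβ : 0 < β) :
    ∑' i : ℕ, Gfun β (i : ℝ) ≤ 4 * Real.sqrt (2 * π) * β + 16 * Real.exp (-1) := by
  set M : ℕ := ⌊Real.sqrt 8 * β⌋₊ with hM
  have hsum := Gfun_summable β hβ
  have hMle : (M : ℝ) ≤ Real.sqrt 8 * β := Nat.floor_le (by positivity)
  have hMlt : Real.sqrt 8 * β < (M : ℝ) + 1 := by
    have := Nat.lt_succ_floor (Real.sqrt 8 * β)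
    push_cast at this
    linarith
  rw [← Summable.sum_add_tsum_nat_add (M + 2) hsum]
  have hsplit : ∑ i ∈ Finset.range (M + 2), Gfun β (i : ℝ) =
      (∑ i ∈ Finset.range M, Gfun β (i : ℝ)) + Gfun β ((M:ℕ) : ℝ) + Gfun β (((M + 1 : ℕ)) : ℝ) := by
    rw [Finset.sum_range_succ, Finset.sum_range_succ]
  have hmono : MonotoneOn (Gfun β) (Icc (0:ℝ) ((0:ℝ) + M)) := by
    apply (Gfun_monoOn β hβ).mono
    apply Icc_subset_Icc le_rfl
    simpa using hMle
  have hhead : (∑ i ∈ Finset.range M, Gfun β (i : ℝ)) ≤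
      ∫ x in (0:ℝ)..((0:ℝ) + M), Gfun β x := by
    have := hmono.sum_le_integral
    simpa using this
  have hIntIoiM : IntegrableOn (Gfun β) (Ioi ((M:ℝ) + 1)) :=
    (Gfun_integrableOn β hβ).mono_set (Ioi_subset_Ioi (by positivity))
  have htail : (∑' i : ℕ, Gfun β ((i + (M + 2) : ℕ) : ℝ)) ≤
      ∫ x in Ioi ((M:ℝ) + 1), Gfun β x := by
    apply Summable.tsum_le_of_sum_range_le ((summable_nat_add_iff (M + 2)).2 hsum)
    intro n
    have hanti : AntitoneOn (Gfun β) (Icc ((M:ℝ) + 1) (((M:ℝ) + 1) + n)) := by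
      apply (Gfun_antiOn β hβ).mono
      intro x hx
      exact le_trans hMlt.le hx.1
    have h1 := hanti.sum_le_integral
    have h2 : (∑ i ∈ Finset.range n, Gfun β ((i + (M + 2) : ℕ) : ℝ)) =
        ∑ i ∈ Finset.range n, Gfun β ((M:ℝ) + 1 + ((i + 1 : ℕ) : ℝ)) := by
      apply Finset.sum_congr rfl
      intro i _
      congr 1
      push_cast
      ring
    rw [h2]
    refine le_trans h1 ?_
    rw [intervalIntegral.integral_of_le (le_add_of_nonneg_right (by positivity))]
    apply setIntegral_mono_set hIntIoiM
    · exact Filter.Eventually.of_forall (fun x => Gfun_nonneg β x)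
    · exact (Set.Ioc_subset_Ioi_self).eventuallyLE
  have hIocint : IntegrableOn (Gfun β) (Ioc (0:ℝ) ((M:ℝ) + 1)) :=
    (Gfun_integrableOn β hβ).mono_set Set.Ioc_subset_Ioi_self
  have hintcomb : (∫ x in (0:ℝ)..((0:ℝ) + M), Gfun β x) + (∫ x in Ioi ((M:ℝ) + 1), Gfun β x)
      ≤ ∫ x in Ioi (0:ℝ), Gfun β x := by
    have e1 : (∫ x in (0:ℝ)..((0:ℝ) + M), Gfun β x) =
        ∫ x in Ioc (0:ℝ) ((0:ℝ) + M), Gfun β x :=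
      intervalIntegral.integral_of_le (by positivity)
    have e2 : (∫ x in Ioc (0:ℝ) ((0:ℝ) + M), Gfun β x) ≤
        ∫ x in Ioc (0:ℝ) ((M:ℝ) + 1), Gfun β x := by
      apply setIntegral_mono_set hIocint
      · exact Filter.Eventually.of_forall (fun x => Gfun_nonneg β x)
      · apply HasSubset.Subset.eventuallyLE
        apply Set.Ioc_subset_Ioc le_rfl
        simp
    have e3 : (∫ x in Ioi (0:ℝ), Gfun β x) =
        (∫ x in Ioc (0:ℝ) ((M:ℝ) + 1), Gfun β x) + ∫ x in Ioi ((M:ℝ) + 1), Gfun β x := by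
      rw [← Set.Ioc_union_Ioi_eq_Ioi (by positivity : (0:ℝ) ≤ (M:ℝ) + 1)]
      rw [setIntegral_union ?hd measurableSet_Ioi hIocint hIntIoiM]
      rw [Set.disjoint_left]
      intro x hx hx'
      exact absurd hx.2 (not_le.2 hx')
    rw [e1, e3]
    linarith
  have hmax1 : Gfun β ((M:ℕ) : ℝ) ≤ 8 * Real.exp (-1) := Gfun_le β hβ _
  have hmax2 : Gfun β (((M + 1 : ℕ)) : ℝ) ≤ 8 * Real.exp (-1) := Gfun_le β hβ _
  rw [hsplit]
  have hval := Gfun_integral_Ioi β hβ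
  linarith

theorem DL2_sum_bound (E β : ℝ) (hE : 0 < E) (hβ : 0 < β) :
    (∑' i : ℕ, (if 2 ≤ i then
          ((i : ℝ) / β) ^ 2 * (1 / 2) *
            Real.exp (-(1 / 2) * (2 * E * β / (i : ℝ) + (i : ℝ) / (2 * β)) ^ 2)
        else 0)) ≤
      (1 / 2) * Real.exp (-E) *
        ∑' i : ℕ, ((i : ℝ) / β) ^ 2 * Real.exp (-(1 / 2) * ((i : ℝ) / (2 * β)) ^ 2) ∧
    (1 / 2) * Real.exp (-E) *
        (∑' i : ℕ, ((i : ℝ) / β) ^ 2 * Real.exp (-(1 / 2) * ((i : ℝ) / (2 * β)) ^ 2)) ≤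
      Real.sqrt (8 * π) * β * Real.exp (-E) * (1 + 4 * Real.exp (-1) / (β * Real.sqrt (2 * π))) := by
  have hTeq : (∑' i : ℕ, ((i : ℝ) / β) ^ 2 * Real.exp (-(1 / 2) * ((i : ℝ) / (2 * β)) ^ 2)) =
      ∑' i : ℕ, Gfun β (i : ℝ) := rfl
  have hsumG := Gfun_summable β hβ
  have hterm : ∀ i : ℕ, (if 2 ≤ i then
      ((i : ℝ) / β) ^ 2 * (1 / 2) *
        Real.exp (-(1 / 2) * (2 * E * β / (i : ℝ) + (i : ℝ) / (2 * β)) ^ 2) else 0)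
      ≤ (1 / 2) * Real.exp (-E) * Gfun β (i : ℝ) := by
    intro i
    split_ifs with h
    · have hi0 : (0:ℝ) < i := by exact_mod_cast lt_of_lt_of_le (by norm_num) h
      have h2ab : 2 * (2 * E * β / (i:ℝ)) * ((i:ℝ) / (2 * β)) = 2 * E := by
        field_simp
      have hexp : Real.exp (-(1 / 2) * (2 * E * β / (i:ℝ) + (i:ℝ) / (2 * β)) ^ 2) ≤
          Real.exp (-E) * Real.exp (-(1 / 2) * ((i:ℝ) / (2 * β)) ^ 2) := by
        rw [← Real.exp_add]
        apply Real.exp_le_exp.2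
        nlinarith [sq_nonneg (2 * E * β / (i:ℝ))]
      calc ((i : ℝ) / β) ^ 2 * (1 / 2) *
            Real.exp (-(1 / 2) * (2 * E * β / (i : ℝ) + (i : ℝ) / (2 * β)) ^ 2)
          ≤ ((i : ℝ) / β) ^ 2 * (1 / 2) *
            (Real.exp (-E) * Real.exp (-(1 / 2) * ((i:ℝ) / (2 * β)) ^ 2)) :=
            mul_le_mul_of_nonneg_left hexp (by positivity)
        _ = (1 / 2) * Real.exp (-E) * Gfun β (i : ℝ) := by
            rw [Gfun]; ring
    · have := Gfun_nonneg β (i : ℝ)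
      positivity
  have hsumR : Summable (fun i : ℕ => (1 / 2) * Real.exp (-E) * Gfun β (i : ℝ)) :=
    hsumG.mul_left _
  have hsumL : Summable (fun i : ℕ => (if 2 ≤ i then
      ((i : ℝ) / β) ^ 2 * (1 / 2) *
        Real.exp (-(1 / 2) * (2 * E * β / (i : ℝ) + (i : ℝ) / (2 * β)) ^ 2) else 0)) := by
    apply Summable.of_nonneg_of_le _ hterm hsumR
    intro i
    split_ifs
    · positivity
    · exact le_rfl
  constructor
  · rw [hTeq]
    calc (∑' i : ℕ, (if 2 ≤ i then
          ((i : ℝ) / β) ^ 2 * (1 / 2) *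
            Real.exp (-(1 / 2) * (2 * E * β / (i : ℝ) + (i : ℝ) / (2 * β)) ^ 2) else 0))
        ≤ ∑' i : ℕ, (1 / 2) * Real.exp (-E) * Gfun β (i : ℝ) :=
          Summable.tsum_le_tsum hterm hsumL hsumR
      _ = (1 / 2) * Real.exp (-E) * ∑' i : ℕ, Gfun β (i : ℝ) := tsum_mul_left
  · rw [hTeq]
    have hS := Gfun_sum_le β hβ
    have h8π : Real.sqrt (8 * π) = 2 * Real.sqrt (2 * π) := by
      rw [show (8:ℝ) * π = 2 ^ 2 * (2 * π) by ring, Real.sqrt_mul (by positivity),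
        Real.sqrt_sq (by norm_num : (0:ℝ) ≤ 2)]
    have hsq : 0 < Real.sqrt (2 * π) := Real.sqrt_pos.2 (by positivity)
    rw [h8π]
    have hre : 2 * Real.sqrt (2 * π) * β * Real.exp (-E) *
        (1 + 4 * Real.exp (-1) / (β * Real.sqrt (2 * π))) =
        Real.exp (-E) * (2 * Real.sqrt (2 * π) * β + 8 * Real.exp (-1)) := by
      field_simp
      ring
    rw [hre]
    nlinarith [Real.exp_pos (-E), hS,
      mul_le_mul_of_nonneg_left hS (Real.exp_pos (-E)).le]
end
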